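/- Let β = α_{ij} ∈ Φ(U_φ) (so d+1 ≤ i, j = i + md for some m ≥ 1) and let p ∈ {1,…,d} with p ≡ i (mod d). Set \mathring{u} = I + ∑_{α ∈ Φ(Υ)} E_α, t = diag(1,…,1,t_j,1,…,1) (entry t_j in position j), and v = I + (1−t_j)E_{ij}. Then v·\mathring{u}·v⁻¹ = t⁻¹·\mathring{u}·t. -/

import Mathlib

open Matrix

/-- `\mathring{u} = I + ∑_{α ∈ Φ(Υ)} E_α` where (zero-indexed)
`Φ(Υ) = { (p,q) : p < d, p+d ≤ q < n, q ≡ p (mod d) }`. -/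
def muMat (k : Type*) [Field k] (n d : ℕ) : Matrix (Fin n) (Fin n) k :=
  Matrix.of fun i j =>
    if i = j then 1
    else if (i : ℕ) < d ∧ (i : ℕ) + d ≤ (j : ℕ) ∧ (j : ℕ) % d = (i : ℕ) % d then 1
    else 0

/-- For `β = α_{ij} ∈ Φ(U_φ)` (zero-indexed: `d ≤ i`, `i+d ≤ j`, `j ≡ i (mod d)`)
and `p < d` with `p ≡ i (mod d)`, setting `t = diag(1,…,1,t_j,1,…,1)` and
`v = I + (1−t_j)E_{ij}`, one has `v·\mathring{u}·v⁻¹ = t⁻¹·\mathring{u}·t`. -/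
theorem conj_mu_by_v_eq_conj_by_t (k : Type*) [Field k] (n d : ℕ) (hd : 1 ≤ d)
    (i j : Fin n) (hi : d ≤ (i : ℕ)) (hij : (i : ℕ) + d ≤ (j : ℕ))
    (hcong : (j : ℕ) % d = (i : ℕ) % d)
    (p : Fin n) (hp : (p : ℕ) < d) (hpi : (p : ℕ) % d = (i : ℕ) % d)
    (c : kˣ) :
    (1 + (1 - (c : k)) • Matrix.single i j (1 : k)) * muMat k n d *
        (1 - (1 - (c : k)) • Matrix.single i j (1 : k))
      = Matrix.diagonal (fun a => if a = j then ((c⁻¹ : kˣ) : k) else 1) * muMat k n d *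
        Matrix.diagonal (fun a => if a = j then (c : k) else 1) := by
  set s : k := 1 - (c : k) with hs
  set E : Matrix (Fin n) (Fin n) k := Matrix.single i j (1 : k) with hE
  set P : Matrix (Fin n) (Fin n) k := Matrix.single p j (1 : k) with hP
  set u : Matrix (Fin n) (Fin n) k := muMat k n d with hu
  -- basic index facts
  have hdj : d ≤ (j : ℕ) := le_trans (Nat.le_add_left d i) hij
  have hinej : i ≠ j := by
    intro h; rw [h] at hij; omega
  have hpnej : p ≠ j := by
    intro h
    have : (p : ℕ) = (j : ℕ) := by rw [h]
    omega
  have hpval : (p : ℕ) = (i : ℕ) % d := by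
    rw [← hpi, Nat.mod_eq_of_lt hp]
  -- muMat rows with index ≥ d are like the identity
  have hrow : ∀ (a b : Fin n), d ≤ (a : ℕ) → u a b = if a = b then 1 else 0 := by
    intro a b ha
    simp only [hu, muMat, Matrix.of_apply]
    by_cases h : a = b
    · simp [h]
    · simp [h]
      omega
  -- h1 : E * u = E
  have h1 : E * u = E := by
    ext a b
    by_cases ha : a = i
    · subst ha
      rw [hE, Matrix.single_mul_apply_same, hrow j b hdj]
      simp [Matrix.single]
    · rw [hE, Matrix.single_mul_apply_of_ne 1 i j a b ha]
      simp [Matrix.single, Ne.symm ha]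
  have hmodle : (i : ℕ) % d + d ≤ (i : ℕ) := by
    have hle : (i : ℕ) % d + d ≤ (i : ℕ) % d + d * ((i : ℕ) / d) :=
      Nat.add_le_add_left (Nat.le_mul_of_pos_right d (Nat.div_pos hi (by omega))) _
    rwa [Nat.mod_add_div] at hle
  -- column i of u
  have hcol : ∀ a : Fin n, u a i = (if a = i then 1 else 0) + (if a = p then 1 else 0) := by
    intro a
    by_cases ha : a = i
    · subst ha
      have : a ≠ p := by intro h; rw [h] at hi; omega
      simp [hu, muMat, this]
    · by_cases hap : a = p
      · subst hap
        have h1' : (a : ℕ) + d ≤ (i : ℕ) := by omega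
        have h2' : (i : ℕ) % d = (a : ℕ) % d := by omega
        simp [hu, muMat, ha, hp, h1', h2']
      · have hane : (a : ℕ) ≠ (p : ℕ) := fun h => hap (Fin.ext h)
        have : ¬((a : ℕ) < d ∧ (a : ℕ) + d ≤ (i : ℕ) ∧ (i : ℕ) % d = (a : ℕ) % d) := by
          rintro ⟨h1', h2', h3'⟩
          exact hane (by rw [← Nat.mod_eq_of_lt h1', ← h3', ← hpval])
        simp [hu, muMat, ha, hap, this]
  -- h2 : u * E = E + P
  have h2 : u * E = E + P := by
    ext a b
    by_cases hb : b = j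
    · subst hb
      rw [hE, Matrix.mul_single_apply_same, hcol a]
      rw [hP]
      simp [Matrix.single, eq_comm]
    · rw [hE, Matrix.mul_single_apply_of_ne 1 i j a b hb]
      simp [hP, Matrix.add_apply, Matrix.single, Ne.symm hb]
  -- h3 : E * E = 0
  have h3 : E * E = 0 := by
    ext a b
    by_cases hb : b = j
    · subst hb
      rw [hE, Matrix.mul_single_apply_same]
      simp [Matrix.single, Ne.symm hinej]
    · rw [hE, Matrix.mul_single_apply_of_ne 1 i j a b hb]
      simp
  -- LHS = u - s • P
  have hLHS : (1 + s • E) * u * (1 - s • E) = u - s • P := by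
    have expand : (1 + s • E) * u * (1 - s • E)
        = u + s • (E * u) - s • (u * E) - (s * s) • (E * u * E) := by
      simp only [Matrix.add_mul, Matrix.mul_sub, Matrix.one_mul, Matrix.mul_one,
        Matrix.smul_mul, Matrix.mul_smul, smul_smul, smul_add, smul_sub]
      abel
    rw [expand, h1, h2, h3]
    simp only [smul_zero, sub_zero, smul_add]
    abel
  rw [hLHS]
  -- now compare entrywise with RHS
  ext a b
  rw [Matrix.mul_diagonal, Matrix.diagonal_mul]
  simp only [Matrix.sub_apply, Matrix.smul_apply, smul_eq_mul]
  by_cases hb : b = j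
  · subst hb
    by_cases ha : a = b
    · subst ha
      have : u a a = 1 := by simp [hu, muMat]
      rw [this]
      have hPaa : P a a = 0 := by simp [Matrix.single, hP, hpnej]
      rw [hPaa, if_pos rfl, if_pos rfl, mul_zero, sub_zero, mul_one]
      exact (Units.inv_mul c).symm
    · by_cases hap : a = p
      · subst hap
        have hupj : u a b = 1 := by
          have h1' : (a : ℕ) + d ≤ (b : ℕ) := by omega
          have h2' : (b : ℕ) % d = (a : ℕ) % d := by omega
          have hab : a ≠ b := by intro h; rw [h] at hp; omega
          simp [hu, muMat, hab, hp, h1', h2']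
        have hPpj : P a b = 1 := by simp [hP, Matrix.single]
        rw [hupj, hPpj, if_neg ha, if_pos rfl]
        ring
      · have hPab : P a b = 0 := by
          simp [hP, Matrix.single, Ne.symm hap]
        have huab : u a b = 0 := by
          have hane : (a : ℕ) ≠ (p : ℕ) := fun h => hap (Fin.ext h)
          have : ¬((a : ℕ) < d ∧ (a : ℕ) + d ≤ (b : ℕ) ∧ (b : ℕ) % d = (a : ℕ) % d) := by
            rintro ⟨h1', h2', h3'⟩
            exact hane (by rw [← Nat.mod_eq_of_lt h1']; omega)
          simp [hu, muMat, ha, this]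
        rw [hPab, huab]
        simp [ha]
  · have hPab : P a b = 0 := by
      simp [hP, Matrix.single, Ne.symm hb]
    rw [hPab, if_neg hb, mul_one, mul_zero, sub_zero]
    by_cases ha : a = j
    · subst ha
      have : u a b = 0 := by
        rw [hrow a b hdj, if_neg]
        intro h; exact hb h.symm
      rw [this]
      simp
    · simp [ha]
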